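/- arXiv:0911.3556 — 4 statements merged into one kernel-verified Lean document; each statement's English description precedes it below -/
import Mathlib

section
/- The explicitly given operators on the 8-dimensional space W define a representation of the derived Kac–Moody algebra of type D₄⁽³⁾: for all i,j ∈ {0,1,2} one has [hᵢ,eⱼ] = a_{ij}·eⱼ, [hᵢ,fⱼ] = −a_{ij}·fⱼ, [eᵢ,fⱼ] = δ_{ij}·hᵢ, and for all i ≠ j the Serre relations (ad eᵢ)^{1−a_{ij}}(eⱼ) = 0 and (ad fᵢ)^{1−a_{ij}}(fⱼ) = 0 hold, where [·,·] is the commutator of linear operators and ad u (v) = [u,v]. -/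
/-!
STATEMENT 0: The explicit operators on the 8-dimensional space `W = ℂ⁸`
(with ordered basis (v₁, v₂, v₃, v₀, ∅, v̄₃, v̄₂, v̄₁)) define a representation
of the derived Kac–Moody algebra of type D₄⁽³⁾.
-/

open Matrix

noncomputable section

/-- Weight triples ⟨αᵢ^∨, wt(m)⟩ of the basis vectors, in the order
(v₁, v₂, v₃, v₀, ∅, v̄₃, v̄₂, v̄₁); the outer index is i ∈ {0,1,2}. -/
def wtD34 : Fin 3 → Fin 8 → ℤ :=
  ![![-2, -1, -1, 0, 0, 1, 1, 2],
    ![1, -1, 2, 0, 0, -2, 1, -1],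
    ![0, 1, -1, 0, 0, 1, -1, 0]]

/-- The diagonal operator hᵢ acting on basis vector m by ⟨αᵢ^∨, wt(m)⟩. -/
def hOp (i : Fin 3) : Matrix (Fin 8) (Fin 8) ℂ :=
  Matrix.diagonal fun m => (wtD34 i m : ℂ)

/-- f₀ : v₀↦v₁, v̄₃↦v₂, v̄₂↦v₃, v̄₁↦∅+(1/2)v₀, ∅↦(3/2)v₁. -/
def f0 : Matrix (Fin 8) (Fin 8) ℂ :=
  !![0,0,0,1,3/2,0,0,0;
     0,0,0,0,0,1,0,0;
     0,0,0,0,0,0,1,0;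
     0,0,0,0,0,0,0,1/2;
     0,0,0,0,0,0,0,1;
     0,0,0,0,0,0,0,0;
     0,0,0,0,0,0,0,0;
     0,0,0,0,0,0,0,0]

/-- f₁ : v₁↦v₂, v₃↦v₀, v₀↦2v̄₃, v̄₂↦v̄₁. -/
def f1 : Matrix (Fin 8) (Fin 8) ℂ :=
  !![0,0,0,0,0,0,0,0;
     1,0,0,0,0,0,0,0;
     0,0,0,0,0,0,0,0;
     0,0,1,0,0,0,0,0;
     0,0,0,0,0,0,0,0;
     0,0,0,2,0,0,0,0;
     0,0,0,0,0,0,0,0;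
     0,0,0,0,0,0,1,0]

/-- f₂ : v₂↦v₃, v̄₃↦v̄₂. -/
def f2 : Matrix (Fin 8) (Fin 8) ℂ :=
  !![0,0,0,0,0,0,0,0;
     0,0,0,0,0,0,0,0;
     0,1,0,0,0,0,0,0;
     0,0,0,0,0,0,0,0;
     0,0,0,0,0,0,0,0;
     0,0,0,0,0,0,0,0;
     0,0,0,0,0,1,0,0;
     0,0,0,0,0,0,0,0]

/-- e₀ : v₁↦∅+(1/2)v₀, v₂↦v̄₃, v₃↦v̄₂, v₀↦v̄₁, ∅↦(3/2)v̄₁. -/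
def e0 : Matrix (Fin 8) (Fin 8) ℂ :=
  !![0,0,0,0,0,0,0,0;
     0,0,0,0,0,0,0,0;
     0,0,0,0,0,0,0,0;
     1/2,0,0,0,0,0,0,0;
     1,0,0,0,0,0,0,0;
     0,1,0,0,0,0,0,0;
     0,0,1,0,0,0,0,0;
     0,0,0,1,3/2,0,0,0]

/-- e₁ : v₂↦v₁, v₀↦2v₃, v̄₃↦v₀, v̄₁↦v̄₂. -/
def e1 : Matrix (Fin 8) (Fin 8) ℂ :=
  !![0,1,0,0,0,0,0,0;
     0,0,0,0,0,0,0,0;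
     0,0,0,2,0,0,0,0;
     0,0,0,0,0,1,0,0;
     0,0,0,0,0,0,0,0;
     0,0,0,0,0,0,0,0;
     0,0,0,0,0,0,0,1;
     0,0,0,0,0,0,0,0]

/-- e₂ : v₃↦v₂, v̄₂↦v̄₃. -/
def e2 : Matrix (Fin 8) (Fin 8) ℂ :=
  !![0,0,0,0,0,0,0,0;
     0,0,1,0,0,0,0,0;
     0,0,0,0,0,0,0,0;
     0,0,0,0,0,0,0,0;
     0,0,0,0,0,0,0,0;
     0,0,0,0,0,0,1,0;
     0,0,0,0,0,0,0,0;
     0,0,0,0,0,0,0,0]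

/-- The Cartan matrix of type D₄⁽³⁾. -/
def cartanD34 : Matrix (Fin 3) (Fin 3) ℤ := !![2,-1,0; -1,2,-3; 0,-1,2]

def eOp : Fin 3 → Matrix (Fin 8) (Fin 8) ℂ := ![e0, e1, e2]

def fOp : Fin 3 → Matrix (Fin 8) (Fin 8) ℂ := ![f0, f1, f2]

/-- The commutator `[u, v] = u v - v u` of linear operators, i.e. `ad u (v)`. -/
def ad (u v : Matrix (Fin 8) (Fin 8) ℂ) : Matrix (Fin 8) (Fin 8) ℂ := u * v - v * u


/-! ### Auxiliary material for the proof -/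

/-- Entrywise cast `ℤ → ℂ` as a ring hom on matrices. -/
def PhiD34 : Matrix (Fin 8) (Fin 8) ℤ →+* Matrix (Fin 8) (Fin 8) ℂ :=
  (Int.castRingHom ℂ).mapMatrix

/-- Integer versions of the diagonal operators. -/
def zhD34 (i : Fin 3) : Matrix (Fin 8) (Fin 8) ℤ := Matrix.diagonal (wtD34 i)

/-- Integer matrices: `2*e0, e1, e2`. -/
def zeD34 : Fin 3 → Matrix (Fin 8) (Fin 8) ℤ :=
  ![!![0,0,0,0,0,0,0,0; 0,0,0,0,0,0,0,0; 0,0,0,0,0,0,0,0; 1,0,0,0,0,0,0,0;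
      2,0,0,0,0,0,0,0; 0,2,0,0,0,0,0,0; 0,0,2,0,0,0,0,0; 0,0,0,2,3,0,0,0],
    !![0,1,0,0,0,0,0,0; 0,0,0,0,0,0,0,0; 0,0,0,2,0,0,0,0; 0,0,0,0,0,1,0,0;
      0,0,0,0,0,0,0,0; 0,0,0,0,0,0,0,0; 0,0,0,0,0,0,0,1; 0,0,0,0,0,0,0,0],
    !![0,0,0,0,0,0,0,0; 0,0,1,0,0,0,0,0; 0,0,0,0,0,0,0,0; 0,0,0,0,0,0,0,0;
      0,0,0,0,0,0,0,0; 0,0,0,0,0,0,1,0; 0,0,0,0,0,0,0,0; 0,0,0,0,0,0,0,0]]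

/-- Integer matrices: `2*f0, f1, f2`. -/
def zfD34 : Fin 3 → Matrix (Fin 8) (Fin 8) ℤ :=
  ![!![0,0,0,2,3,0,0,0; 0,0,0,0,0,2,0,0; 0,0,0,0,0,0,2,0; 0,0,0,0,0,0,0,1;
      0,0,0,0,0,0,0,2; 0,0,0,0,0,0,0,0; 0,0,0,0,0,0,0,0; 0,0,0,0,0,0,0,0],
    !![0,0,0,0,0,0,0,0; 1,0,0,0,0,0,0,0; 0,0,0,0,0,0,0,0; 0,0,1,0,0,0,0,0;
      0,0,0,0,0,0,0,0; 0,0,0,2,0,0,0,0; 0,0,0,0,0,0,0,0; 0,0,0,0,0,0,1,0],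
    !![0,0,0,0,0,0,0,0; 0,0,0,0,0,0,0,0; 0,1,0,0,0,0,0,0; 0,0,0,0,0,0,0,0;
      0,0,0,0,0,0,0,0; 0,0,0,0,0,0,0,0; 0,0,0,0,0,1,0,0; 0,0,0,0,0,0,0,0]]

/-- Scaling factors relating the complex operators to the integer matrices. -/
def cD34 : Fin 3 → ℂ := fun i => if i = 0 then (2:ℂ)⁻¹ else 1

/-- Integer factor for `[e_i, f_i]`. -/
def zdD34 : Fin 3 → ℤ := fun i => if i = 0 then 4 else 1

lemma comp_vecEmpty_eq {α β : Type*} (g : α → β) : g ∘ (![] : Fin 0 → α) = ![] := by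
  ext i
  exact i.elim0

lemma comp_vecCons_eq {α β : Type*} {n : ℕ} (g : α → β) (x : α) (u : Fin n → α) :
    g ∘ Matrix.vecCons x u = Matrix.vecCons (g x) (g ∘ u) := by
  ext i
  refine Fin.cases ?_ ?_ i <;> simp

lemma map_of_eq {α β : Type*} (f : α → β) (v : Fin 8 → Fin 8 → α) :
    (Matrix.of v).map f = Matrix.of ((f ∘ ·) ∘ v) := rfl

lemma hOp_eq_zh (i : Fin 3) : hOp i = PhiD34 (zhD34 i) := by
  rw [PhiD34, RingHom.mapMatrix_apply, zhD34, Matrix.diagonal_map (by simp)]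
  rfl

lemma eOp_eq_ze (j : Fin 3) : eOp j = cD34 j • PhiD34 (zeD34 j) := by
  fin_cases j
  · show e0 = (2:ℂ)⁻¹ • PhiD34 (zeD34 0)
    rw [PhiD34, RingHom.mapMatrix_apply, show zeD34 0 = zeD34 0 from rfl]
    rw [e0, zeD34, Matrix.cons_val_zero, map_of_eq, Matrix.smul_of]
    simp only [comp_vecCons_eq, comp_vecEmpty_eq, Function.comp, Matrix.smul_cons, Matrix.smul_empty, smul_eq_mul]
    norm_num
  · show e1 = (1:ℂ) • PhiD34 (zeD34 1)
    rw [PhiD34, RingHom.mapMatrix_apply, one_smul]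
    rw [e1, zeD34, Matrix.cons_val_one, Matrix.cons_val_zero, map_of_eq]
    simp only [comp_vecCons_eq, comp_vecEmpty_eq, Function.comp]
    norm_num
  · show e2 = (1:ℂ) • PhiD34 (zeD34 2)
    rw [PhiD34, RingHom.mapMatrix_apply, one_smul]
    rw [e2, show zeD34 2 = zeD34 2 from rfl, zeD34]
    rw [Matrix.cons_val_two, Matrix.tail_cons, Matrix.head_cons, map_of_eq]
    simp only [comp_vecCons_eq, comp_vecEmpty_eq, Function.comp]
    norm_num

lemma fOp_eq_zf (j : Fin 3) : fOp j = cD34 j • PhiD34 (zfD34 j) := by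
  fin_cases j
  · show f0 = (2:ℂ)⁻¹ • PhiD34 (zfD34 0)
    rw [PhiD34, RingHom.mapMatrix_apply]
    rw [f0, zfD34, Matrix.cons_val_zero, map_of_eq, Matrix.smul_of]
    simp only [comp_vecCons_eq, comp_vecEmpty_eq, Function.comp, Matrix.smul_cons, Matrix.smul_empty, smul_eq_mul]
    norm_num
  · show f1 = (1:ℂ) • PhiD34 (zfD34 1)
    rw [PhiD34, RingHom.mapMatrix_apply, one_smul]
    rw [f1, zfD34, Matrix.cons_val_one, Matrix.cons_val_zero, map_of_eq]
    simp only [comp_vecCons_eq, comp_vecEmpty_eq, Function.comp]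
    norm_num
  · show f2 = (1:ℂ) • PhiD34 (zfD34 2)
    rw [PhiD34, RingHom.mapMatrix_apply, one_smul]
    rw [f2, zfD34, Matrix.cons_val_two, Matrix.tail_cons, Matrix.head_cons, map_of_eq]
    simp only [comp_vecCons_eq, comp_vecEmpty_eq, Function.comp]
    norm_num

lemma ad_smul_smul (c d : ℂ) (A B : Matrix (Fin 8) (Fin 8) ℤ) :
    ad (c • PhiD34 A) (d • PhiD34 B) = (c * d) • PhiD34 (A * B - B * A) := by
  simp only [ad, map_sub, _root_.map_mul, smul_sub, smul_mul_assoc, mul_smul_comm, smul_smul]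
  rw [mul_comm d c]

lemma ad_iter_eq (c d : ℂ) (A B : Matrix (Fin 8) (Fin 8) ℤ) (n : ℕ) :
    (ad (c • PhiD34 A))^[n] (d • PhiD34 B)
      = (c ^ n * d) • PhiD34 ((fun X => A * X - X * A)^[n] B) := by
  induction n with
  | zero => simp
  | succ n ih =>
      rw [Function.iterate_succ_apply', Function.iterate_succ_apply', ih, ad_smul_smul]
      ring_nf

lemma zcomm_he : ∀ i j : Fin 3,
    zhD34 i * zeD34 j - zeD34 j * zhD34 i = cartanD34 i j • zeD34 j := by decide

lemma zcomm_hf : ∀ i j : Fin 3,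
    zhD34 i * zfD34 j - zfD34 j * zhD34 i = (-cartanD34 i j) • zfD34 j := by decide

lemma zcomm_ef : ∀ i j : Fin 3,
    zeD34 i * zfD34 j - zfD34 j * zeD34 i
      = if i = j then zdD34 i • zhD34 i else 0 := by decide

lemma zserre_e : ∀ i j : Fin 3, i ≠ j →
    (fun X => zeD34 i * X - X * zeD34 i)^[(1 - cartanD34 i j).toNat] (zeD34 j) = 0 := by decide

lemma zserre_f : ∀ i j : Fin 3, i ≠ j →
    (fun X => zfD34 i * X - X * zfD34 i)^[(1 - cartanD34 i j).toNat] (zfD34 j) = 0 := by decide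

lemma cD34_scal : ∀ i : Fin 3, cD34 i * cD34 i * ((zdD34 i : ℤ) : ℂ) = 1 := by
  intro i
  fin_cases i <;> norm_num [cD34, zdD34, Fin.ext_iff]

theorem D34_fundamental_representation :
    (∀ i j : Fin 3, ad (hOp i) (eOp j) = (cartanD34 i j : ℂ) • eOp j) ∧
    (∀ i j : Fin 3, ad (hOp i) (fOp j) = -(cartanD34 i j : ℂ) • fOp j) ∧
    (∀ i j : Fin 3, ad (eOp i) (fOp j) = if i = j then hOp i else 0) ∧
    (∀ i j : Fin 3, i ≠ j → (ad (eOp i))^[(1 - cartanD34 i j).toNat] (eOp j) = 0) ∧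
    (∀ i j : Fin 3, i ≠ j → (ad (fOp i))^[(1 - cartanD34 i j).toNat] (fOp j) = 0) := by
  refine ⟨?_, ?_, ?_, ?_, ?_⟩
  · intro i j
    rw [hOp_eq_zh, eOp_eq_ze, show PhiD34 (zhD34 i) = (1:ℂ) • PhiD34 (zhD34 i) from
      (one_smul _ _).symm, ad_smul_smul, one_mul, zcomm_he i j, map_zsmul,
      ← Int.cast_smul_eq_zsmul ℂ, smul_comm]
  · intro i j
    rw [hOp_eq_zh, fOp_eq_zf, show PhiD34 (zhD34 i) = (1:ℂ) • PhiD34 (zhD34 i) from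
      (one_smul _ _).symm, ad_smul_smul, one_mul, zcomm_hf i j, map_zsmul,
      ← Int.cast_smul_eq_zsmul ℂ, smul_comm, Int.cast_neg, neg_smul]
  · intro i j
    rw [eOp_eq_ze, fOp_eq_zf, ad_smul_smul, zcomm_ef i j]
    by_cases h : i = j
    · subst h
      rw [if_pos rfl, if_pos rfl, map_zsmul, hOp_eq_zh, ← Int.cast_smul_eq_zsmul ℂ,
        smul_smul, cD34_scal i, one_smul]
    · rw [if_neg h, if_neg h, map_zero, smul_zero]
  · intro i j hij
    rw [eOp_eq_ze, eOp_eq_ze, ad_iter_eq, zserre_e i j hij, map_zero, smul_zero]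
  · intro i j hij
    rw [fOp_eq_zf, fOp_eq_zf, ad_iter_eq, zserre_f i j hij, map_zero, smul_zero]
end
end

section
/- The rational function γ₀ rescales by c^{−1} under the explicit action e₁^c: for all c ∈ ℂ^× and all x ∈ (ℂ^×)⁶ where the expressions are defined, 𝒞₁·𝒞₃·𝒞₅ = c, and consequently γ₀(e₁^c(x)) = c^{−1}·γ₀(x), where γ₀(x) = x₀²/(x₁x₃x₅) and e₁^c(x) = (x₀, 𝒞₁x₁, x₂, 𝒞₃x₃, x₄, 𝒞₅x₅). -/
noncomputable section

/-- Denominator of 𝒞₁ (also the function ε₁): x₀/x₁ + x₀x₂/(x₁²x₃) + x₀x₂x₄/(x₁²x₃²x₅). -/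
def s1 (x : Fin 6 → ℂ) : ℂ :=
  x 0 / x 1 + x 0 * x 2 / ((x 1) ^ 2 * x 3) + x 0 * x 2 * x 4 / ((x 1) ^ 2 * (x 3) ^ 2 * x 5)

/-- Numerator of 𝒞₁ = denominator of 𝒞₃. -/
def d3 (c : ℂ) (x : Fin 6 → ℂ) : ℂ :=
  c * x 0 / x 1 + x 0 * x 2 / ((x 1) ^ 2 * x 3) + x 0 * x 2 * x 4 / ((x 1) ^ 2 * (x 3) ^ 2 * x 5)

/-- Numerator of 𝒞₃ = denominator of 𝒞₅. -/
def d5 (c : ℂ) (x : Fin 6 → ℂ) : ℂ :=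
  c * x 0 / x 1 + c * x 0 * x 2 / ((x 1) ^ 2 * x 3)
    + x 0 * x 2 * x 4 / ((x 1) ^ 2 * (x 3) ^ 2 * x 5)

/-- 𝒞₁, 𝒞₃, 𝒞₅. -/
def C1 (c : ℂ) (x : Fin 6 → ℂ) : ℂ := d3 c x / s1 x
def C3 (c : ℂ) (x : Fin 6 → ℂ) : ℂ := d5 c x / d3 c x
def C5 (c : ℂ) (x : Fin 6 → ℂ) : ℂ := c * s1 x / d5 c x

/-- Denominator of 𝒞₂ (also the function ε₂): x₁³/x₂ + x₁³x₃³/(x₂²x₄). -/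
def s2 (x : Fin 6 → ℂ) : ℂ :=
  (x 1) ^ 3 / x 2 + (x 1) ^ 3 * (x 3) ^ 3 / ((x 2) ^ 2 * x 4)

/-- Numerator of 𝒞₂ = denominator of 𝒞₄. -/
def d4 (c : ℂ) (x : Fin 6 → ℂ) : ℂ :=
  c * (x 1) ^ 3 / x 2 + (x 1) ^ 3 * (x 3) ^ 3 / ((x 2) ^ 2 * x 4)

/-- 𝒞₂, 𝒞₄. -/
def C2 (c : ℂ) (x : Fin 6 → ℂ) : ℂ := d4 c x / s2 x
def C4 (c : ℂ) (x : Fin 6 → ℂ) : ℂ := c * s2 x / d4 c x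

/-- The action e₁^c(x) := (x₀, 𝒞₁x₁, x₂, 𝒞₃x₃, x₄, 𝒞₅x₅). -/
def e1act (c : ℂ) (x : Fin 6 → ℂ) : Fin 6 → ℂ :=
  ![x 0, C1 c x * x 1, x 2, C3 c x * x 3, x 4, C5 c x * x 5]

/-- The action e₂^c(x) := (x₀, x₁, 𝒞₂x₂, x₃, 𝒞₄x₄, x₅). -/
def e2act (c : ℂ) (x : Fin 6 → ℂ) : Fin 6 → ℂ :=
  ![x 0, x 1, C2 c x * x 2, x 3, C4 c x * x 4, x 5]

/-- 𝒞₁𝒞₃𝒞₅ = c, and consequently γ₀(e₁^c(x)) = c⁻¹·γ₀(x),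
where γ₀(x) = x₀²/(x₁x₃x₅). -/
theorem gamma0_e1_rescale (c : ℂ) (hc : c ≠ 0) (x : Fin 6 → ℂ) (hx : ∀ i, x i ≠ 0)
    (hs1 : s1 x ≠ 0) (hd3 : d3 c x ≠ 0) (hd5 : d5 c x ≠ 0) :
    C1 c x * C3 c x * C5 c x = c ∧
    (e1act c x 0) ^ 2 / (e1act c x 1 * e1act c x 3 * e1act c x 5) =
      c⁻¹ * ((x 0) ^ 2 / (x 1 * x 3 * x 5)) := by
  have hprod : C1 c x * C3 c x * C5 c x = c := by
    unfold C1 C3 C5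
    field_simp
  refine ⟨hprod, ?_⟩
  have h1 : x 1 ≠ 0 := hx 1
  have h3 : x 3 ≠ 0 := hx 3
  have h5 : x 5 ≠ 0 := hx 5
  have he : e1act c x 1 * e1act c x 3 * e1act c x 5 = c * (x 1 * x 3 * x 5) := by
    show C1 c x * x 1 * (C3 c x * x 3) * (C5 c x * x 5) = _
    linear_combination (x 1 * x 3 * x 5) * hprod
  have he0 : e1act c x 0 = x 0 := rfl
  rw [he, he0]
  field_simp
end
end

section
/- The rational functions ε₁ and ε₂ rescale by c^{−1} under the respective explicit actions: for all c ∈ ℂ^× and all x ∈ (ℂ^×)⁶ where the expressions are defined, ε₁(e₁^c(x)) = c^{−1}·ε₁(x) and ε₂(e₂^c(x)) = c^{−1}·ε₂(x), where ε₁(x) = x₀/x₁ + x₀x₂/(x₁²x₃) + x₀x₂x₄/(x₁²x₃²x₅) and ε₂(x) = x₁³/x₂ + x₁³x₃³/(x₂²x₄). -/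
set_option maxHeartbeats 1000000
noncomputable section

lemma gen1 (c a b t s p q : ℂ) (hc : c ≠ 0) (hs : s ≠ 0) (hp : p ≠ 0) (hq : q ≠ 0)
    (hid : c*a*q + c*b*s + t*p = p*q) :
    a/(p/s) + b/((p/s)^2*((q/p))) + t/((p/s)^2*(q/p)^2*(c*s/q)) = c⁻¹ * s := by
  field_simp
  linear_combination hid

lemma gen2 (c a b s p : ℂ) (hc : c ≠ 0) (hs : s ≠ 0) (hp : p ≠ 0)
    (hid : c*a + b = p) :
    a/(p/s) + b/((p/s)^2*(c*s/p)) = c⁻¹ * s := by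
  field_simp
  linear_combination hid

lemma split1 (x0 x1 x2 x3 x4 x5 A B E : ℂ) (h1 : x1 ≠ 0) (h3 : x3 ≠ 0) (h5 : x5 ≠ 0)
    (hA : A ≠ 0) (hB : B ≠ 0) (hE : E ≠ 0) :
    x0/(A*x1) + x0*x2/((A*x1)^2*(B*x3)) + x0*x2*x4/((A*x1)^2*(B*x3)^2*(E*x5)) =
    (x0/x1)/A + (x0*x2/(x1^2*x3))/(A^2*B) + (x0*x2*x4/(x1^2*x3^2*x5))/(A^2*B^2*E) := by
  ring

lemma split2 (x1 x2 x3 x4 A B : ℂ) (h2 : x2 ≠ 0) (h4 : x4 ≠ 0)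
    (hA : A ≠ 0) (hB : B ≠ 0) :
    x1^3/(A*x2) + x1^3*x3^3/((A*x2)^2*(B*x4)) =
    (x1^3/x2)/A + (x1^3*x3^3/(x2^2*x4))/(A^2*B) := by
  ring


/-- ε₁(e₁^c(x)) = c⁻¹·ε₁(x) and ε₂(e₂^c(x)) = c⁻¹·ε₂(x), where
ε₁(x) = x₀/x₁ + x₀x₂/(x₁²x₃) + x₀x₂x₄/(x₁²x₃²x₅) = s1(x) and
ε₂(x) = x₁³/x₂ + x₁³x₃³/(x₂²x₄) = s2(x). -/
theorem epsilon_rescale (c : ℂ) (hc : c ≠ 0) (x : Fin 6 → ℂ) (hx : ∀ i, x i ≠ 0)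
    (hs1 : s1 x ≠ 0) (hd3 : d3 c x ≠ 0) (hd5 : d5 c x ≠ 0)
    (hs2 : s2 x ≠ 0) (hd4 : d4 c x ≠ 0) :
    s1 (e1act c x) = c⁻¹ * s1 x ∧ s2 (e2act c x) = c⁻¹ * s2 x := by
  have h0 := hx 0; have h1 := hx 1; have h2 := hx 2; have h3 := hx 3
  have h4 := hx 4; have h5 := hx 5
  have hC1 : C1 c x ≠ 0 := div_ne_zero hd3 hs1
  have hC3 : C3 c x ≠ 0 := div_ne_zero hd5 hd3
  have hC5 : C5 c x ≠ 0 := div_ne_zero (mul_ne_zero hc hs1) hd5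
  have hC2 : C2 c x ≠ 0 := div_ne_zero hd4 hs2
  have hC4 : C4 c x ≠ 0 := div_ne_zero (mul_ne_zero hc hs2) hd4
  constructor
  · show s1 (e1act c x) = c⁻¹ * s1 x
    have E0 : e1act c x 0 = x 0 := rfl
    have E1 : e1act c x 1 = C1 c x * x 1 := rfl
    have E2 : e1act c x 2 = x 2 := rfl
    have E3 : e1act c x 3 = C3 c x * x 3 := rfl
    have E4 : e1act c x 4 = x 4 := rfl
    have E5 : e1act c x 5 = C5 c x * x 5 := rfl
    rw [s1, E0, E1, E2, E3, E4, E5,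
      split1 (x 0) (x 1) (x 2) (x 3) (x 4) (x 5) _ _ _ h1 h3 h5 hC1 hC3 hC5]
    set a := x 0 / x 1 with ha
    set b := x 0 * x 2 / ((x 1)^2 * x 3) with hb
    set t := x 0 * x 2 * x 4 / ((x 1)^2 * (x 3)^2 * x 5) with ht
    have hsx : s1 x = a + b + t := rfl
    have hpx : d3 c x = c * a + b + t := by rw [d3, ha, hb, ht]; ring
    have hqx : d5 c x = c * a + c * b + t := by rw [d5, ha, hb, ht]; ring
    have hid : c * a * d5 c x + c * b * s1 x + t * d3 c x = d3 c x * d5 c x := by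
      rw [hsx, hpx, hqx]; ring
    rw [C1, C3, C5]
    exact gen1 c a b t (s1 x) (d3 c x) (d5 c x) hc hs1 hd3 hd5 hid
  · show s2 (e2act c x) = c⁻¹ * s2 x
    have E1 : e2act c x 1 = x 1 := rfl
    have E2 : e2act c x 2 = C2 c x * x 2 := rfl
    have E3 : e2act c x 3 = x 3 := rfl
    have E4 : e2act c x 4 = C4 c x * x 4 := rfl
    rw [s2, E1, E2, E3, E4,
      split2 (x 1) (x 2) (x 3) (x 4) _ _ h2 h4 hC2 hC4]
    set a := (x 1)^3 / x 2 with ha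
    set b := (x 1)^3 * (x 3)^3 / ((x 2)^2 * x 4) with hb
    have hsx : s2 x = a + b := rfl
    have hpx : d4 c x = c * a + b := by rw [d4, ha, hb]; ring
    rw [C2, C4]
    exact gen2 c a b (s2 x) (d4 c x) hc hs2 hd4 hpx.symm
end
end

section
/- The rational functions γ₁, γ₂ rescale under the explicit actions e₁^c, e₂^c according to the Cartan matrix of type D₄⁽³⁾: for all c ∈ ℂ^× and all x ∈ (ℂ^×)⁶ where the expressions are defined, γ₁(e₁^c(x)) = c²·γ₁(x), γ₂(e₁^c(x)) = c^{−3}·γ₂(x), γ₁(e₂^c(x)) = c^{−1}·γ₁(x), and γ₂(e₂^c(x)) = c²·γ₂(x), where γ₁(x) = x₁²x₃²x₅²/(x₀x₂x₄) and γ₂(x) = x₂²x₄²/(x₁³x₃³x₅³). -/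
noncomputable section

/-- γ₁(x) = x₁²x₃²x₅²/(x₀x₂x₄). -/
def gamma1 (x : Fin 6 → ℂ) : ℂ :=
  (x 1) ^ 2 * (x 3) ^ 2 * (x 5) ^ 2 / (x 0 * x 2 * x 4)

/-- γ₂(x) = x₂²x₄²/(x₁³x₃³x₅³). -/
def gamma2 (x : Fin 6 → ℂ) : ℂ :=
  (x 2) ^ 2 * (x 4) ^ 2 / ((x 1) ^ 3 * (x 3) ^ 3 * (x 5) ^ 3)

lemma cons_val_five (a b c d e f : ℂ) : (![a,b,c,d,e,f] : Fin 6 → ℂ) 5 = f := rfl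
lemma cons_val_two' (a b c d e f : ℂ) : (![a,b,c,d,e,f] : Fin 6 → ℂ) 2 = c := rfl
lemma cons_val_three' (a b c d e f : ℂ) : (![a,b,c,d,e,f] : Fin 6 → ℂ) 3 = d := rfl
lemma cons_val_four' (a b c d e f : ℂ) : (![a,b,c,d,e,f] : Fin 6 → ℂ) 4 = e := rfl

/-- γ₁, γ₂ rescale under e₁^c, e₂^c according to the Cartan
matrix of type D₄⁽³⁾: γ₁(e₁^c(x)) = c²γ₁(x), γ₂(e₁^c(x)) = c⁻³γ₂(x),
γ₁(e₂^c(x)) = c⁻¹γ₁(x), γ₂(e₂^c(x)) = c²γ₂(x). -/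
theorem gamma_rescale_cartan (c : ℂ) (hc : c ≠ 0) (x : Fin 6 → ℂ) (hx : ∀ i, x i ≠ 0)
    (hs1 : s1 x ≠ 0) (hd3 : d3 c x ≠ 0) (hd5 : d5 c x ≠ 0)
    (hs2 : s2 x ≠ 0) (hd4 : d4 c x ≠ 0) :
    gamma1 (e1act c x) = c ^ 2 * gamma1 x ∧
    gamma2 (e1act c x) = (c ^ 3)⁻¹ * gamma2 x ∧
    gamma1 (e2act c x) = c⁻¹ * gamma1 x ∧
    gamma2 (e2act c x) = c ^ 2 * gamma2 x := by
  have h1 : C1 c x * C3 c x * C5 c x = c := by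
    unfold C1 C3 C5
    field_simp
  have h2 : C2 c x * C4 c x = c := by
    unfold C2 C4
    field_simp
  have e1 : ∀ i, e1act c x i = ![x 0, C1 c x * x 1, x 2, C3 c x * x 3, x 4, C5 c x * x 5] i :=
    fun i => rfl
  refine ⟨?_, ?_, ?_, ?_⟩
  · calc gamma1 (e1act c x)
        = (C1 c x * C3 c x * C5 c x) ^ 2 * gamma1 x := by
          simp only [gamma1, e1act]
          norm_num [Matrix.cons_val_zero, Matrix.cons_val_one, Matrix.head_cons, Matrix.cons_val_succ, cons_val_five, cons_val_two', cons_val_three', cons_val_four']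
          ring
      _ = c ^ 2 * gamma1 x := by rw [h1]
  · calc gamma2 (e1act c x)
        = ((C1 c x * C3 c x * C5 c x) ^ 3)⁻¹ * gamma2 x := by
          simp only [gamma2, e1act]
          norm_num [Matrix.cons_val_zero, Matrix.cons_val_one, Matrix.head_cons, Matrix.cons_val_succ, cons_val_five, cons_val_two', cons_val_three', cons_val_four']
          ring
      _ = (c ^ 3)⁻¹ * gamma2 x := by rw [h1]
  · calc gamma1 (e2act c x)
        = (C2 c x * C4 c x)⁻¹ * gamma1 x := by
          simp only [gamma1, e2act]
          norm_num [Matrix.cons_val_zero, Matrix.cons_val_one, Matrix.head_cons, Matrix.cons_val_succ, cons_val_five, cons_val_two', cons_val_three', cons_val_four']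
          ring
      _ = c⁻¹ * gamma1 x := by rw [h2]
  · calc gamma2 (e2act c x)
        = (C2 c x * C4 c x) ^ 2 * gamma2 x := by
          simp only [gamma2, e2act]
          norm_num [Matrix.cons_val_zero, Matrix.cons_val_one, Matrix.head_cons, Matrix.cons_val_succ, cons_val_five, cons_val_two', cons_val_three', cons_val_four']
          ring
      _ = c ^ 2 * gamma2 x := by rw [h2]
end
end
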